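/- For every bounded linear operator B on E with ‖A − B‖ < 1/4, the number 1 belongs to the spectrum of B, i.e., I − B is not invertible in the algebra of bounded operators on E. -/

import Mathlib

set_option maxHeartbeats 1000000


noncomputable section

open Metric

/-- The closed disk of radius 1/2 centered at 1 in ℂ. -/
def K : Set ℂ := Metric.closedBall 1 (1/2)

instance : CompactSpace K :=
  isCompact_iff_compactSpace.mp (isCompact_closedBall 1 (1/2))

open scoped Classical in
/-- Extension of a continuous function on K to ℂ by 0. -/
def extendFn (f : C(K, ℂ)) : ℂ → ℂ := fun z => if h : z ∈ K then f ⟨z, h⟩ else 0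

/-- The subspace of C(K, ℂ) of functions holomorphic on the interior of K. -/
def Esub : Submodule ℂ C(K, ℂ) where
  carrier := {f | DifferentiableOn ℂ (extendFn f) (interior K)}
  add_mem' := by
    intro f g hf hg
    have h : extendFn (f + g) = extendFn f + extendFn g := by
      funext z; by_cases h : z ∈ K <;> simp [extendFn, h]
    simpa [Set.mem_setOf_eq, h] using hf.add hg
  zero_mem' := by
    have h : extendFn (0 : C(K, ℂ)) = fun _ => 0 := by
      funext z; by_cases h : z ∈ K <;> simp [extendFn, h]
    simpa [Set.mem_setOf_eq, h] using differentiableOn_const (0 : ℂ)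
  smul_mem' := by
    intro c f hf
    have h : extendFn (c • f) = c • extendFn f := by
      funext z; by_cases h : z ∈ K <;> simp [extendFn, h]
    simpa [Set.mem_setOf_eq, h] using hf.const_smul c

/-- The Banach space E. -/
abbrev E : Type := ↥Esub

/-- The constant function 1 as an element of E. -/
def oneE : E :=
  ⟨1, by
    have h : ∀ z ∈ interior K, extendFn (1 : C(K, ℂ)) z = 1 := by
      intro z hz; simp [extendFn, interior_subset hz]
    exact (differentiableOn_const (1 : ℂ)).congr h⟩



/-- The point 1 is in K. -/
lemma one_mem_K : (1 : ℂ) ∈ K := by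
  simp [K]

/-- Coercion of E-norm. -/
lemma E_norm_eq (f : E) : ‖f‖ = ‖(f : C(K, ℂ))‖ := rfl

lemma extendFn_apply (f : C(K, ℂ)) (z : ℂ) (hz : z ∈ K) :
    extendFn f z = f ⟨z, hz⟩ := by
  simp [extendFn, hz]

lemma continuousOn_extendFn (f : C(K, ℂ)) : ContinuousOn (extendFn f) K := by
  rw [continuousOn_iff_continuous_restrict]
  have : K.domRestrict (extendFn f) = ⇑f := by
    funext z
    simp [Set.domRestrict, extendFn_apply f z z.2]
  rw [this]
  exact f.continuous

/-- Esub is a closed subspace (Weierstrass: uniform limits of holomorphic are holomorphic). -/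
lemma isClosed_Esub : IsClosed (Esub : Set C(K, ℂ)) := by
  apply IsSeqClosed.isClosed
  intro fn f hfn hlim
  have h1 : TendstoUniformly (fun n (z : K) => (fn n) z) (⇑f) Filter.atTop :=
    ContinuousMap.tendsto_iff_tendstoUniformly.mp hlim
  have huniform : TendstoUniformlyOn (fun n z => extendFn (fn n) z) (extendFn f)
      Filter.atTop K := by
    rw [Metric.tendstoUniformlyOn_iff]
    rw [Metric.tendstoUniformly_iff] at h1
    intro ε hε
    filter_upwards [h1 ε hε] with n hn z hz
    have := hn ⟨z, hz⟩
    rwa [extendFn_apply _ _ hz, extendFn_apply _ _ hz]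
  show DifferentiableOn ℂ (extendFn f) (interior K)
  exact ((huniform.mono interior_subset).tendstoLocallyUniformlyOn).differentiableOn
    (Filter.Eventually.of_forall (fun n => hfn n)) isOpen_interior

instance : CompleteSpace E := isClosed_Esub.completeSpace_coe

/-- A generic ring identity. -/
lemma ring_fact {S : Type*} [Ring S] (b r a : S) (h : (1 - b) * r = 1) :
    (1 - b) * (1 - r * (a - b)) = 1 - a := by
  rw [mul_sub, mul_one, ← mul_assoc, h, one_mul]
  abel

/-- Maximum modulus lower bound: `(1 - A)` is bounded below by `1/2`. -/
lemma half_norm_le (A : E →L[ℂ] E)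
    (hA : ∀ (f : E) (z : K), ((A f : C(K, ℂ)) z) = (z : ℂ) * ((f : C(K, ℂ)) z))
    (f : E) : (1/2 : ℝ) * ‖f‖ ≤ ‖(1 - A) f‖ := by
  set g : E := (1 - A) f with hg
  have hgz : ∀ z : K, ((g : C(K, ℂ)) z) = (1 - (z : ℂ)) * ((f : C(K, ℂ)) z) := by
    intro z
    have : ((g : C(K, ℂ)) z) = ((f : C(K, ℂ)) z) - ((A f : C(K, ℂ)) z) := by
      simp [hg, ContinuousLinearMap.sub_apply]
    rw [this, hA f z]
    ring
  -- maximum modulus principle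
  have hball : Bornology.IsBounded (ball (1:ℂ) (1/2)) := isBounded_ball
  have hK : closure (ball (1:ℂ) (1/2)) = K := by
    rw [K, closure_ball _ (by norm_num)]
  have hdiff : DiffContOnCl ℂ (extendFn (f : C(K, ℂ))) (ball (1:ℂ) (1/2)) := by
    constructor
    · have h2 : DifferentiableOn ℂ (extendFn (f : C(K, ℂ))) (interior K) := f.2
      have hiK : interior K = ball (1:ℂ) (1/2) := by
        rw [K, interior_closedBall _ (by norm_num)]
      rwa [hiK] at h2
    · rw [hK]; exact continuousOn_extendFn _
  have hfront : ∀ z ∈ frontier (ball (1:ℂ) (1/2)),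
      ‖extendFn (f : C(K, ℂ)) z‖ ≤ 2 * ‖g‖ := by
    intro z hz
    rw [frontier_ball _ (by norm_num : (1/2 : ℝ) ≠ 0)] at hz
    have hzK : z ∈ K := sphere_subset_closedBall hz
    have hzd : ‖z - 1‖ = 1/2 := by
      simpa [mem_sphere_iff_norm] using hz
    have h1z : ‖(1 : ℂ) - z‖ = 1/2 := by
      rw [← hzd, ← norm_neg]; ring_nf
    rw [extendFn_apply _ z hzK]
    have := hgz ⟨z, hzK⟩
    have hnorm : ‖(g : C(K, ℂ)) ⟨z, hzK⟩‖ = (1/2) * ‖(f : C(K, ℂ)) ⟨z, hzK⟩‖ := by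
      rw [this, norm_mul, h1z]
    have hle : ‖(g : C(K, ℂ)) ⟨z, hzK⟩‖ ≤ ‖(g : C(K, ℂ))‖ :=
      ContinuousMap.norm_coe_le_norm _ _
    rw [hnorm] at hle
    have : ‖(f : C(K, ℂ)) ⟨z, hzK⟩‖ ≤ 2 * ‖(g : C(K, ℂ))‖ := by linarith
    exact this
  have hmax : ∀ z : K, ‖(f : C(K, ℂ)) z‖ ≤ 2 * ‖g‖ := by
    intro z
    have hz : (z : ℂ) ∈ closure (ball (1:ℂ) (1/2)) := by rw [hK]; exact z.2
    have := Complex.norm_le_of_forall_mem_frontier_norm_le hball hdiff hfront hz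
    rwa [extendFn_apply _ _ z.2, Subtype.coe_eta] at this
  have : ‖(f : C(K, ℂ))‖ ≤ 2 * ‖g‖ := by
    exact (ContinuousMap.norm_le _ (by positivity)).mpr hmax
  rw [E_norm_eq]
  linarith

/-- `1 - A` is not a unit (not surjective). -/
lemma not_isUnit_one_sub_A (A : E →L[ℂ] E)
    (hA : ∀ (f : E) (z : K), ((A f : C(K, ℂ)) z) = (z : ℂ) * ((f : C(K, ℂ)) z)) :
    ¬ IsUnit ((1 : E →L[ℂ] E) - A) := by
  intro h
  obtain ⟨u, hu⟩ := h
  -- surjectivity: find f with (1 - A) f = oneE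
  set f : E := (↑u⁻¹ : E →L[ℂ] E) oneE with hf
  have hfe : ((1 : E →L[ℂ] E) - A) f = oneE := by
    rw [hf]
    have hm : ((1 : E →L[ℂ] E) - A) * (↑u⁻¹ : E →L[ℂ] E) = 1 := by rw [← hu, u.mul_inv]
    calc ((1 : E →L[ℂ] E) - A) ((↑u⁻¹ : E →L[ℂ] E) oneE)
        = (((1 : E →L[ℂ] E) - A) * (↑u⁻¹ : E →L[ℂ] E)) oneE := by
          rw [ContinuousLinearMap.mul_apply]
      _ = oneE := by rw [hm, ContinuousLinearMap.one_apply]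
  -- evaluate at z = 1
  have hz1 : (⟨1, one_mem_K⟩ : K) = ⟨1, one_mem_K⟩ := rfl
  have heval : ((((1 : E →L[ℂ] E) - A) f : E) : C(K, ℂ)) ⟨1, one_mem_K⟩ = 0 := by
    have : ((((1 : E →L[ℂ] E) - A) f : E) : C(K, ℂ)) ⟨1, one_mem_K⟩
        = ((f : C(K, ℂ)) ⟨1, one_mem_K⟩) - ((A f : C(K, ℂ)) ⟨1, one_mem_K⟩) := by
      simp [ContinuousLinearMap.sub_apply]
    rw [this, hA f ⟨1, one_mem_K⟩]
    simp
  rw [hfe] at heval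
  have : ((oneE : E) : C(K, ℂ)) ⟨1, one_mem_K⟩ = 1 := rfl
  rw [this] at heval
  exact one_ne_zero heval

/-- If ‖A − B‖ < 1/4 then 1 ∈ σ(B), i.e., I − B is not invertible in the
algebra of bounded operators on E. -/
theorem one_mem_spectrum_of_close (A : E →L[ℂ] E)
    (hA : ∀ (f : E) (z : K), ((A f : C(K, ℂ)) z) = (z : ℂ) * ((f : C(K, ℂ)) z))
    (B : E →L[ℂ] E) (hB : ‖A - B‖ < 1/4) :
    (1 : ℂ) ∈ spectrum ℂ B ∧ ¬ IsUnit ((1 : E →L[ℂ] E) - B) := by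
  have key : ¬ IsUnit ((1 : E →L[ℂ] E) - B) := by
    intro hunit
    obtain ⟨u, hu⟩ := hunit
    set R : E →L[ℂ] E := (↑u⁻¹ : E →L[ℂ] E) with hR
    set c : ℝ := 1/2 - ‖A - B‖ with hc
    have hABnn : (0:ℝ) ≤ ‖A - B‖ := (A - B).opNorm_nonneg
    have hcpos : (1/4 : ℝ) < c := by rw [hc]; linarith
    -- (1 - B) is bounded below by c
    have hlow : ∀ f : E, c * ‖f‖ ≤ ‖((1 : E →L[ℂ] E) - B) f‖ := by
      intro f
      have h1 := half_norm_le A hA f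
      have h2 : ‖((1 : E →L[ℂ] E) - A) f - ((1 : E →L[ℂ] E) - B) f‖ ≤ ‖A - B‖ * ‖f‖ := by
        have he : ((1 : E →L[ℂ] E) - A) f - ((1 : E →L[ℂ] E) - B) f = -((A - B) f) := by
          rw [ContinuousLinearMap.sub_apply, ContinuousLinearMap.sub_apply,
            ContinuousLinearMap.sub_apply]
          abel
        rw [he, norm_neg]
        exact (A - B).le_opNorm f
      have h3 := norm_sub_norm_le (((1 : E →L[ℂ] E) - A) f) (((1 : E →L[ℂ] E) - B) f)
      have := h3.trans h2
      rw [hc]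
      nlinarith [norm_nonneg (((1 : E →L[ℂ] E) - B) f)]
    -- bound on the inverse R
    have hRle : ‖R‖ ≤ 1/c := by
      apply ContinuousLinearMap.opNorm_le_bound _ (by positivity)
      intro g
      have h := hlow (R g)
      have hRg : ((1 : E →L[ℂ] E) - B) (R g) = g := by
        have hm : ((1 : E →L[ℂ] E) - B) * R = 1 := by rw [hR, ← hu, u.mul_inv]
        calc ((1 : E →L[ℂ] E) - B) (R g) = (((1 : E →L[ℂ] E) - B) * R) g := by
              rw [ContinuousLinearMap.mul_apply]
          _ = g := by rw [hm, ContinuousLinearMap.one_apply]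
      rw [hRg] at h
      rw [div_mul_eq_mul_div, le_div_iff₀ (lt_trans (by norm_num : (0:ℝ) < 1/4) hcpos)]
      linarith [mul_le_mul_of_nonneg_left h (le_of_lt (by linarith : (0:ℝ) < 1))]
    -- Neumann series
    have hsmall : ‖R * (A - B)‖ < 1 := by
      calc ‖R * (A - B)‖ = ‖R.comp (A - B)‖ := rfl
        _ ≤ ‖R‖ * ‖A - B‖ := ContinuousLinearMap.opNorm_comp_le _ _
        _ ≤ (1/c) * ‖A - B‖ := by
            apply mul_le_mul_of_nonneg_right hRle hABnn
        _ < 1 := by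
            rw [div_mul_eq_mul_div, one_mul, div_lt_one (lt_trans (by norm_num : (0:ℝ) < 1/4) hcpos)]
            rw [hc]; linarith
    have hunit2 : IsUnit ((1 : E →L[ℂ] E) - R * (A - B)) := by
      have h := (Units.oneSub (R * (A - B)) (by exact hsmall)).isUnit
      rwa [Units.val_oneSub] at h
    have hfact : ((1 : E →L[ℂ] E) - B) * ((1 : E →L[ℂ] E) - R * (A - B))
        = (1 : E →L[ℂ] E) - A := by
      have huR : ((1 : E →L[ℂ] E) - B) * R = 1 := by
        rw [hR, ← hu, u.mul_inv]
      exact ring_fact B R A huR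
    have : IsUnit ((1 : E →L[ℂ] E) - A) := by
      rw [← hfact]
      have h := u.isUnit.mul hunit2
      rwa [hu] at h
    exact not_isUnit_one_sub_A A hA this
  constructor
  · rw [spectrum.mem_iff]
    simpa using key
  · exact key
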